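/- Let φ_1, ..., φ_n be vectors in ℂ^d with n ≤ 2d − 1. If {φ_i}_{i=1}^n is full spark, i.e., every subfamily of size at most d is linearly independent over ℂ, then the outer products {φ_iφ_i*}_{i=1}^n are linearly independent over ℝ in the space of d×d Hermitian matrices. -/

import Mathlib

/-- The outer product `x x*` of a vector `x ∈ ℂ^d` with itself:
the `d × d` matrix whose `(j,k)` entry is `x j * conj (x k)`. -/
def outer {d : ℕ} (x : EuclideanSpace ℂ (Fin d)) : Matrix (Fin d) (Fin d) ℂ :=
  Matrix.of fun j k => x j * starRingEnd ℂ (x k)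

open Finset

lemma outer_key {d n : ℕ} (φ : Fin n → EuclideanSpace ℂ (Fin d))
    (c : Fin n → ℝ) (hc : ∑ i, c i • outer (φ i) = 0)
    (x : EuclideanSpace ℂ (Fin d)) :
    ∑ i, c i * ‖(inner ℂ x (φ i) : ℂ)‖^2 = 0 := by
  have hjk : ∀ j k : Fin d, ∑ i, (c i : ℂ) * (φ i j * starRingEnd ℂ (φ i k)) = 0 := by
    intro j k
    have := congrFun (congrFun hc j) k
    simpa [Matrix.sum_apply, outer, Matrix.of_apply, Pi.smul_apply,
      Complex.real_smul] using this
  have h1 : ∀ j : Fin d,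
      ∑ i, (c i : ℂ) * (φ i j * starRingEnd ℂ ((inner ℂ x (φ i) : ℂ))) = 0 := by
    intro j
    calc ∑ i, (c i : ℂ) * (φ i j * starRingEnd ℂ ((inner ℂ x (φ i) : ℂ)))
        = ∑ i, ∑ k, x k * ((c i : ℂ) * (φ i j * starRingEnd ℂ (φ i k))) := by
          refine Finset.sum_congr rfl fun i _ => ?_
          rw [PiLp.inner_apply, map_sum, Finset.mul_sum, Finset.mul_sum]
          refine Finset.sum_congr rfl fun k _ => ?_
          simp only [RCLike.inner_apply, map_mul, Complex.conj_conj]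
          ring
      _ = ∑ k, ∑ i, x k * ((c i : ℂ) * (φ i j * starRingEnd ℂ (φ i k))) :=
          Finset.sum_comm
      _ = 0 := by
          refine Finset.sum_eq_zero fun k _ => ?_
          rw [← Finset.mul_sum, hjk, mul_zero]
  have h2 : ∑ i, (c i : ℂ) * ((inner ℂ x (φ i) : ℂ) * starRingEnd ℂ ((inner ℂ x (φ i) : ℂ))) = 0 := by
    calc ∑ i, (c i : ℂ) * ((inner ℂ x (φ i) : ℂ) * starRingEnd ℂ ((inner ℂ x (φ i) : ℂ)))
        = ∑ i, ∑ j, starRingEnd ℂ (x j) *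
            ((c i : ℂ) * (φ i j * starRingEnd ℂ ((inner ℂ x (φ i) : ℂ)))) := by
          refine Finset.sum_congr rfl fun i _ => ?_
          rw [PiLp.inner_apply, Finset.sum_mul, Finset.mul_sum]
          refine Finset.sum_congr rfl fun j _ => ?_
          simp only [RCLike.inner_apply, map_mul, Complex.conj_conj]
          ring
      _ = ∑ j, ∑ i, starRingEnd ℂ (x j) *
            ((c i : ℂ) * (φ i j * starRingEnd ℂ ((inner ℂ x (φ i) : ℂ)))) := Finset.sum_comm
      _ = 0 := by
          refine Finset.sum_eq_zero fun j _ => ?_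
          rw [← Finset.mul_sum, h1, mul_zero]
  have h3 : ((∑ i, c i * ‖(inner ℂ x (φ i) : ℂ)‖^2 : ℝ) : ℂ) = 0 := by
    push_cast
    rw [← h2]
    refine Finset.sum_congr rfl fun i _ => ?_
    rw [Complex.mul_conj, Complex.normSq_eq_norm_sq]
    push_cast
    ring
  exact_mod_cast h3

open Finset in
lemma outer_aux {d n : ℕ} (hn : n + 1 ≤ 2 * d) (φ : Fin n → EuclideanSpace ℂ (Fin d))
    (hfs : ∀ I : Finset (Fin n), I.card ≤ d →
        LinearIndependent ℂ (fun i : I => φ i))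
    (c : Fin n → ℝ) (hc : ∑ i, c i • outer (φ i) = 0)
    (hsmall : (univ.filter (fun i => c i < 0)).card ≤ (univ.filter (fun i => 0 < c i)).card)
    (j : Fin n) (hj : 0 < c j) : False := by
  classical
  set P : Finset (Fin n) := univ.filter (fun i => 0 < c i) with hP
  set N : Finset (Fin n) := univ.filter (fun i => c i < 0) with hN
  -- orthogonality transfer
  have hPN : ∀ x : EuclideanSpace ℂ (Fin d),
      (∀ i ∈ N, (inner ℂ x (φ i) : ℂ) = 0) → ∀ i ∈ P, (inner ℂ x (φ i) : ℂ) = 0 := by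
    intro x hx
    have hsum : ∑ i ∈ P, c i * ‖(inner ℂ x (φ i) : ℂ)‖^2 = 0 := by
      rw [← outer_key φ c hc x]
      apply Finset.sum_subset (Finset.subset_univ P)
      intro i _ hiP
      rcases lt_trichotomy (c i) 0 with h | h | h
      · have : i ∈ N := by simp [hN, h]
        rw [hx i this]; simp
      · rw [h]; ring
      · exact absurd (by simp [hP, h]) hiP
    intro i hiP
    have hterm : c i * ‖(inner ℂ x (φ i) : ℂ)‖^2 = 0 := by
      have hnn : ∀ k ∈ P, 0 ≤ c k * ‖(inner ℂ x (φ k) : ℂ)‖^2 := by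
        intro k hk
        have : 0 < c k := by simpa [hP] using hk
        positivity
      exact (Finset.sum_eq_zero_iff_of_nonneg hnn).1 hsum i hiP
    have hci : 0 < c i := by simpa [hP] using hiP
    have : ‖(inner ℂ x (φ i) : ℂ)‖^2 = 0 := by
      rcases mul_eq_zero.1 hterm with h | h
      · exact absurd h hci.ne'
      · exact h
    simpa using this
  -- span inclusion
  set SP := Submodule.span ℂ (φ '' ↑P) with hSP
  set SN := Submodule.span ℂ (φ '' ↑N) with hSN
  have horth : SNᗮ ≤ SPᗮ := by
    intro x hx
    have hxn : ∀ i ∈ N, (inner ℂ x (φ i) : ℂ) = 0 := by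
      intro i hi
      have : φ i ∈ SN := Submodule.subset_span ⟨i, hi, rfl⟩
      exact Submodule.inner_left_of_mem_orthogonal this hx
    have hxp := hPN x hxn
    rw [Submodule.mem_orthogonal]
    intro u hu
    have : SP ≤ (ℂ ∙ x)ᗮ := by
      rw [hSP, Submodule.span_le]
      rintro _ ⟨i, hi, rfl⟩
      exact Submodule.mem_orthogonal_singleton_iff_inner_right.2 (hxp i hi)
    exact inner_eq_zero_symm.1 (Submodule.mem_orthogonal_singleton_iff_inner_right.1 (this hu))
  have hle : SP ≤ SN := by
    have := Submodule.orthogonal_le horth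
    rwa [Submodule.orthogonal_orthogonal, Submodule.orthogonal_orthogonal] at this
  -- contradiction with full spark
  have hjP : j ∈ P := by simp [hP, hj]
  have hjN : j ∉ N := by simp [hN, not_lt.2 hj.le]
  have hmem : φ j ∈ Submodule.span ℂ (φ '' ↑N) := hle (Submodule.subset_span ⟨j, hjP, rfl⟩)
  set I : Finset (Fin n) := insert j N with hI
  have hcardPN : P.card + N.card ≤ n := by
    have hdisj : Disjoint P N := by
      rw [Finset.disjoint_left]
      intro a haP haN
      have h1 : 0 < c a := by simpa [hP] using haP
      have h2 : c a < 0 := by simpa [hN] using haN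
      linarith
    calc P.card + N.card = (P ∪ N).card := (Finset.card_union_of_disjoint hdisj).symm
      _ ≤ (univ : Finset (Fin n)).card := Finset.card_le_card (Finset.subset_univ _)
      _ = n := Finset.card_univ.trans (Fintype.card_fin n)
  have hIcard : I.card ≤ d := by
    have : I.card ≤ N.card + 1 := Finset.card_insert_le _ _
    omega
  have li := hfs I hIcard
  have hjI : j ∈ I := Finset.mem_insert_self _ _
  have := li.notMem_span_image (s := {i : I | (i : Fin n) ∈ N}) (x := ⟨j, hjI⟩)
    (by simpa using hjN)
  apply this
  have himg : (fun i : I => φ i) '' {i : I | (i : Fin n) ∈ N} = φ '' ↑N := by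
    ext y
    constructor
    · rintro ⟨⟨i, hiI⟩, hiN, rfl⟩
      exact ⟨i, hiN, rfl⟩
    · rintro ⟨i, hiN, rfl⟩
      exact ⟨⟨i, Finset.mem_insert_of_mem hiN⟩, hiN, rfl⟩
  rw [himg]
  exact hmem

/-- If `φ_1, ..., φ_n ∈ ℂ^d` with `n ≤ 2d - 1` is full spark (every subfamily of size
at most `d` is linearly independent over `ℂ`), then the outer products `{φ_i φ_i*}`
are linearly independent over `ℝ`. -/
theorem stmt13 {d n : ℕ} (hn : n + 1 ≤ 2 * d) (φ : Fin n → EuclideanSpace ℂ (Fin d))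
    (hfs : ∀ I : Finset (Fin n), I.card ≤ d →
        LinearIndependent ℂ (fun i : I => φ i)) :
    LinearIndependent ℝ (fun i => outer (φ i)) := by
  rw [Fintype.linearIndependent_iff]
  intro c hc i
  by_contra hci
  set P : Finset (Fin n) := univ.filter (fun k => 0 < c k) with hP
  set N : Finset (Fin n) := univ.filter (fun k => c k < 0) with hN
  have hc' : ∑ k, (-c) k • outer (φ k) = 0 := by
    have h := congrArg (fun M => (-1 : ℝ) • M) hc
    simpa [Finset.smul_sum, smul_smul] using h
  have hPN' : univ.filter (fun k => (-c) k < 0) = P := by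
    ext k; simp [hP]
  have hNP' : univ.filter (fun k => 0 < (-c) k) = N := by
    ext k; simp [hN]
  rcases le_or_gt N.card P.card with hle | hlt
  · rcases lt_trichotomy (c i) 0 with h | h | h
    · -- i ∈ N so N nonempty; for -c : small side is P' = ... need card P ≤ card N? no.
      -- c i < 0 : apply aux to -c requires filter(-c<0).card ≤ filter(0< -c).card i.e. P.card ≤ N.card
      -- but we have N.card ≤ P.card. So P is nonempty? Not necessarily... if N.card ≤ P.card and N nonempty then P nonempty, pick j ∈ P.
      have hNne : N.Nonempty := ⟨i, by simp [hN, h]⟩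
      have hPne : P.Nonempty := Finset.card_pos.1 (lt_of_lt_of_le (Finset.card_pos.2 hNne) hle)
      obtain ⟨j, hj⟩ := hPne
      exact outer_aux hn φ hfs c hc hle j (by simpa [hP] using hj)
    · exact hci h
    · exact outer_aux hn φ hfs c hc hle i (by simpa using h)
  · -- P.card < N.card : use -c, whose neg-set is P, pos-set is N
    have hsmall' : (univ.filter (fun k => (-c) k < 0)).card ≤
        (univ.filter (fun k => 0 < (-c) k)).card := by
      rw [hPN', hNP']; exact hlt.le
    have hNne : N.Nonempty := Finset.card_pos.1 (lt_of_le_of_lt (Nat.zero_le _) hlt)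
    obtain ⟨j, hj⟩ := hNne
    have hj' : 0 < (-c) j := by
      have : c j < 0 := by simpa [hN] using hj
      simpa using this
    exact outer_aux hn φ hfs (-c) hc' hsmall' j hj'
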